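/- Let (S₁,S₂,I₁,I₂,R₁,R₂,D₁,D₂) be a solution of the two-group active-population SIRD model on [0,∞) with initial data Sᵢ₀ := Sᵢ(0) > 0, Iᵢ₀ := Iᵢ(0) ≥ 0, Rᵢ₀ := Rᵢ(0) ≥ 0, all compartments nonnegative and bounded, Sᵢ(t) > 0 and Nᵢ(t) > 0 for all t ≥ 0, and suppose the compartment limits as t → ∞ exist with lim Iᵢ(t) = 0. Let S⁻ = lim_{n→∞} Tⁿ(0,0) and S⁺ = lim_{n→∞} Tⁿ(S₁₀,S₂₀) (these limits exist). Then the final susceptible state S^∞ = (lim_{t→∞} S₁(t), lim_{t→∞} S₂(t)) satisfies the bracketing S⁻ ≤ S^∞ ≤ S⁺ componentwise. -/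

import Mathlib

open Filter

lemma constOn_of_hasDerivAt_zero (g : ℝ → ℝ) (hg : ∀ t ≥ (0:ℝ), HasDerivAt g 0 t) :
    ∀ t ≥ (0:ℝ), g t = g 0 := by
  intro t ht
  exact constant_of_has_deriv_right_zero
    (fun x hx => (hg x hx.1).continuousAt.continuousWithinAt)
    (fun x hx => (hg x hx.1).hasDerivWithinAt) t ⟨ht, le_rfl⟩

noncomputable def Tmap (β11 β12 β21 β22 μ1 μ2 S10 S20 ε1 ε2 Z1 Z2 N10 N20 : ℝ) :
    ℝ × ℝ → ℝ × ℝ := fun X =>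
  (S10 * ((ε1 * X.1 + Z1) / N10) ^ (β11 / μ1) * ((ε2 * X.2 + Z2) / N20) ^ (β12 / μ2),
   S20 * ((ε1 * X.1 + Z1) / N10) ^ (β21 / μ1) * ((ε2 * X.2 + Z2) / N20) ^ (β22 / μ2))

set_option maxHeartbeats 2000000 in
theorem stmt_11
    (β11 β12 β21 β22 γ1 γ2 μ1 μ2 : ℝ)
    (hβ11 : 0 < β11) (hβ12 : 0 < β12) (hβ21 : 0 < β21) (hβ22 : 0 < β22)
    (hγ1 : 0 < γ1) (hγ2 : 0 < γ2) (hμ1 : 0 < μ1) (hμ2 : 0 < μ2)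
    (S1 S2 I1 I2 R1 R2 D1 D2 N1 N2 : ℝ → ℝ)
    (hN1 : ∀ t, N1 t = S1 t + I1 t + R1 t)
    (hN2 : ∀ t, N2 t = S2 t + I2 t + R2 t)
    (hS1' : ∀ t ≥ (0:ℝ), HasDerivAt S1 (-(β11 * I1 t / N1 t + β12 * I2 t / N2 t) * S1 t) t)
    (hS2' : ∀ t ≥ (0:ℝ), HasDerivAt S2 (-(β21 * I1 t / N1 t + β22 * I2 t / N2 t) * S2 t) t)
    (hI1' : ∀ t ≥ (0:ℝ), HasDerivAt I1 ((β11 * I1 t / N1 t + β12 * I2 t / N2 t) * S1 t - (γ1 + μ1) * I1 t) t)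
    (hI2' : ∀ t ≥ (0:ℝ), HasDerivAt I2 ((β21 * I1 t / N1 t + β22 * I2 t / N2 t) * S2 t - (γ2 + μ2) * I2 t) t)
    (hR1' : ∀ t ≥ (0:ℝ), HasDerivAt R1 (γ1 * I1 t) t)
    (hR2' : ∀ t ≥ (0:ℝ), HasDerivAt R2 (γ2 * I2 t) t)
    (hD1' : ∀ t ≥ (0:ℝ), HasDerivAt D1 (μ1 * I1 t) t)
    (hD2' : ∀ t ≥ (0:ℝ), HasDerivAt D2 (μ2 * I2 t) t)
    (hS10 : 0 < S1 0) (hS20 : 0 < S2 0)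
    (hI10 : 0 ≤ I1 0) (hI20 : 0 ≤ I2 0)
    (hR10 : 0 ≤ R1 0) (hR20 : 0 ≤ R2 0)
    (hD10 : 0 ≤ D1 0) (hD20 : 0 ≤ D2 0)
    (hnn1 : ∀ t ≥ (0:ℝ), 0 ≤ S1 t ∧ 0 ≤ I1 t ∧ 0 ≤ R1 t ∧ 0 ≤ D1 t)
    (hnn2 : ∀ t ≥ (0:ℝ), 0 ≤ S2 t ∧ 0 ≤ I2 t ∧ 0 ≤ R2 t ∧ 0 ≤ D2 t)
    (hbd : ∃ C : ℝ, ∀ t ≥ (0:ℝ), S1 t ≤ C ∧ I1 t ≤ C ∧ R1 t ≤ C ∧ D1 t ≤ C ∧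
      S2 t ≤ C ∧ I2 t ≤ C ∧ R2 t ≤ C ∧ D2 t ≤ C)
    (hS1pos : ∀ t ≥ (0:ℝ), 0 < S1 t)
    (hS2pos : ∀ t ≥ (0:ℝ), 0 < S2 t)
    (hN1pos : ∀ t ≥ (0:ℝ), 0 < N1 t)
    (hN2pos : ∀ t ≥ (0:ℝ), 0 < N2 t)
    (ε1 ε2 Z1 Z2 : ℝ)
    (hε1 : ε1 = μ1 / (γ1 + μ1)) (hε2 : ε2 = μ2 / (γ2 + μ2))
    (hZ1 : Z1 = (1 - ε1) * N1 0 + ε1 * R1 0) (hZ2 : Z2 = (1 - ε2) * N2 0 + ε2 * R2 0)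
    (T : ℝ × ℝ → ℝ × ℝ)
    (hT : T = Tmap β11 β12 β21 β22 μ1 μ2 (S1 0) (S2 0) ε1 ε2 Z1 Z2 (N1 0) (N2 0))
    (S1inf S2inf : ℝ)
    (hS1inf : Tendsto S1 atTop (nhds S1inf)) (hS2inf : Tendsto S2 atTop (nhds S2inf))
    (hI1inf : Tendsto I1 atTop (nhds 0)) (hI2inf : Tendsto I2 atTop (nhds 0))
    (hR1inf : ∃ l : ℝ, Tendsto R1 atTop (nhds l)) (hR2inf : ∃ l : ℝ, Tendsto R2 atTop (nhds l))
    (hD1inf : ∃ l : ℝ, Tendsto D1 atTop (nhds l)) (hD2inf : ∃ l : ℝ, Tendsto D2 atTop (nhds l))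
    (Sm Sp : ℝ × ℝ)
    (hSm : Tendsto (fun n => T^[n] (0, 0)) atTop (nhds Sm))
    (hSp : Tendsto (fun n => T^[n] (S1 0, S2 0)) atTop (nhds Sp)) :
    (Sm.1 ≤ S1inf ∧ S1inf ≤ Sp.1) ∧ (Sm.2 ≤ S2inf ∧ S2inf ≤ Sp.2) := by
  -- basic positivity facts
  obtain ⟨r1, hr1⟩ := hR1inf
  obtain ⟨r2, hr2⟩ := hR2inf
  have hμγ1 : (0:ℝ) < γ1 + μ1 := by linarith
  have hμγ2 : (0:ℝ) < γ2 + μ2 := by linarith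
  have hN10 : 0 < N1 0 := hN1pos 0 le_rfl
  have hN20 : 0 < N2 0 := hN2pos 0 le_rfl
  have hε1pos : 0 < ε1 := by rw [hε1]; exact div_pos hμ1 hμγ1
  have hε2pos : 0 < ε2 := by rw [hε2]; exact div_pos hμ2 hμγ2
  have hε1lt : ε1 < 1 := by rw [hε1]; exact (div_lt_one hμγ1).2 (by linarith)
  have hε2lt : ε2 < 1 := by rw [hε2]; exact (div_lt_one hμγ2).2 (by linarith)
  have hZ1pos : 0 < Z1 := by
    rw [hZ1]
    have := mul_pos (by linarith : (0:ℝ) < 1 - ε1) hN10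
    have := mul_nonneg hε1pos.le hR10
    linarith
  have hZ2pos : 0 < Z2 := by
    rw [hZ2]
    have := mul_pos (by linarith : (0:ℝ) < 1 - ε2) hN20
    have := mul_nonneg hε2pos.le hR20
    linarith
  have hS1nn : 0 ≤ S1inf :=
    ge_of_tendsto hS1inf (by filter_upwards [eventually_ge_atTop (0:ℝ)] with t ht
                             exact (hnn1 t ht).1)
  have hS2nn : 0 ≤ S2inf :=
    ge_of_tendsto hS2inf (by filter_upwards [eventually_ge_atTop (0:ℝ)] with t ht
                             exact (hnn2 t ht).1)
  -- derivative of N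
  have hN1fun : N1 = fun t => S1 t + I1 t + R1 t := funext hN1
  have hN2fun : N2 = fun t => S2 t + I2 t + R2 t := funext hN2
  have hN1d : ∀ t ≥ (0:ℝ), HasDerivAt N1 (-(μ1 * I1 t)) t := by
    intro t ht
    rw [hN1fun]
    have h := ((hS1' t ht).add (hI1' t ht)).add (hR1' t ht)
    exact h.congr_deriv (by ring)
  have hN2d : ∀ t ≥ (0:ℝ), HasDerivAt N2 (-(μ2 * I2 t)) t := by
    intro t ht
    rw [hN2fun]
    have h := ((hS2' t ht).add (hI2' t ht)).add (hR2' t ht)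
    exact h.congr_deriv (by ring)
  -- conservation law R + (γ/μ) N constant
  have hRN1 : ∀ t ≥ (0:ℝ), R1 t + γ1/μ1 * N1 t = R1 0 + γ1/μ1 * N1 0 :=
    constOn_of_hasDerivAt_zero _ (by
      intro t ht
      have h := (hR1' t ht).add (((hN1d t ht)).const_mul (γ1/μ1))
      refine h.congr_deriv ?_
      field_simp
      ring)
  have hRN2 : ∀ t ≥ (0:ℝ), R2 t + γ2/μ2 * N2 t = R2 0 + γ2/μ2 * N2 0 :=
    constOn_of_hasDerivAt_zero _ (by
      intro t ht
      have h := (hR2' t ht).add (((hN2d t ht)).const_mul (γ2/μ2))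
      refine h.congr_deriv ?_
      field_simp
      ring)
  -- log relation
  have key1 : ∀ t ≥ (0:ℝ),
      Real.log (S1 t) - β11/μ1 * Real.log (N1 t) - β12/μ2 * Real.log (N2 t)
      = Real.log (S1 0) - β11/μ1 * Real.log (N1 0) - β12/μ2 * Real.log (N2 0) :=
    constOn_of_hasDerivAt_zero _ (by
      intro t ht
      have h := (((hS1' t ht).log (hS1pos t ht).ne').sub
        (((hN1d t ht).log (hN1pos t ht).ne').const_mul (β11/μ1))).sub
        (((hN2d t ht).log (hN2pos t ht).ne').const_mul (β12/μ2))
      refine h.congr_deriv ?_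
      have h1 := (hN1pos t ht).ne'
      have h2 := (hN2pos t ht).ne'
      have h3 := (hS1pos t ht).ne'
      field_simp
      ring)
  have key2 : ∀ t ≥ (0:ℝ),
      Real.log (S2 t) - β21/μ1 * Real.log (N1 t) - β22/μ2 * Real.log (N2 t)
      = Real.log (S2 0) - β21/μ1 * Real.log (N1 0) - β22/μ2 * Real.log (N2 0) :=
    constOn_of_hasDerivAt_zero _ (by
      intro t ht
      have h := (((hS2' t ht).log (hS2pos t ht).ne').sub
        (((hN1d t ht).log (hN1pos t ht).ne').const_mul (β21/μ1))).sub
        (((hN2d t ht).log (hN2pos t ht).ne').const_mul (β22/μ2))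
      refine h.congr_deriv ?_
      have h1 := (hN1pos t ht).ne'
      have h2 := (hN2pos t ht).ne'
      have h3 := (hS2pos t ht).ne'
      field_simp
      ring)
  -- explicit formula for S
  have hform1 : ∀ t ≥ (0:ℝ),
      S1 t = S1 0 * (N1 t / N1 0) ^ (β11/μ1) * (N2 t / N2 0) ^ (β12/μ2) := by
    intro t ht
    have hb1 : 0 < N1 t / N1 0 := div_pos (hN1pos t ht) hN10
    have hb2 : 0 < N2 t / N2 0 := div_pos (hN2pos t ht) hN20
    have hp1 : 0 < (N1 t / N1 0) ^ (β11/μ1) := Real.rpow_pos_of_pos hb1 _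
    have hp2 : 0 < (N2 t / N2 0) ^ (β12/μ2) := Real.rpow_pos_of_pos hb2 _
    have hlog : Real.log (S1 t)
        = Real.log (S1 0 * (N1 t / N1 0) ^ (β11/μ1) * (N2 t / N2 0) ^ (β12/μ2)) := by
      rw [Real.log_mul (by positivity) hp2.ne', Real.log_mul hS10.ne' hp1.ne',
        Real.log_rpow hb1, Real.log_rpow hb2,
        Real.log_div (hN1pos t ht).ne' hN10.ne', Real.log_div (hN2pos t ht).ne' hN20.ne']
      linear_combination key1 t ht
    exact Real.log_injOn_pos (Set.mem_Ioi.2 (hS1pos t ht))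
      (Set.mem_Ioi.2 (by positivity)) hlog
  have hform2 : ∀ t ≥ (0:ℝ),
      S2 t = S2 0 * (N1 t / N1 0) ^ (β21/μ1) * (N2 t / N2 0) ^ (β22/μ2) := by
    intro t ht
    have hb1 : 0 < N1 t / N1 0 := div_pos (hN1pos t ht) hN10
    have hb2 : 0 < N2 t / N2 0 := div_pos (hN2pos t ht) hN20
    have hp1 : 0 < (N1 t / N1 0) ^ (β21/μ1) := Real.rpow_pos_of_pos hb1 _
    have hp2 : 0 < (N2 t / N2 0) ^ (β22/μ2) := Real.rpow_pos_of_pos hb2 _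
    have hlog : Real.log (S2 t)
        = Real.log (S2 0 * (N1 t / N1 0) ^ (β21/μ1) * (N2 t / N2 0) ^ (β22/μ2)) := by
      rw [Real.log_mul (by positivity) hp2.ne', Real.log_mul hS20.ne' hp1.ne',
        Real.log_rpow hb1, Real.log_rpow hb2,
        Real.log_div (hN1pos t ht).ne' hN10.ne', Real.log_div (hN2pos t ht).ne' hN20.ne']
      linear_combination key2 t ht
    exact Real.log_injOn_pos (Set.mem_Ioi.2 (hS2pos t ht))
      (Set.mem_Ioi.2 (by positivity)) hlog
  -- limit of N
  have hN1tend : Tendsto N1 atTop (nhds (S1inf + r1)) := by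
    rw [hN1fun]
    simpa using (hS1inf.add hI1inf).add hr1
  have hN2tend : Tendsto N2 atTop (nhds (S2inf + r2)) := by
    rw [hN2fun]
    simpa using (hS2inf.add hI2inf).add hr2
  -- limit of conservation law
  have hRN1lim : r1 + γ1/μ1 * (S1inf + r1) = R1 0 + γ1/μ1 * N1 0 := by
    have h1 : Tendsto (fun t => R1 t + γ1/μ1 * N1 t) atTop
        (nhds (r1 + γ1/μ1 * (S1inf + r1))) := hr1.add (hN1tend.const_mul _)
    have h2 : Tendsto (fun t => R1 t + γ1/μ1 * N1 t) atTop
        (nhds (R1 0 + γ1/μ1 * N1 0)) := by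
      apply Tendsto.congr' _ tendsto_const_nhds
      filter_upwards [eventually_ge_atTop (0:ℝ)] with t ht
      exact (hRN1 t ht).symm
    exact tendsto_nhds_unique h1 h2
  have hRN2lim : r2 + γ2/μ2 * (S2inf + r2) = R2 0 + γ2/μ2 * N2 0 := by
    have h1 : Tendsto (fun t => R2 t + γ2/μ2 * N2 t) atTop
        (nhds (r2 + γ2/μ2 * (S2inf + r2))) := hr2.add (hN2tend.const_mul _)
    have h2 : Tendsto (fun t => R2 t + γ2/μ2 * N2 t) atTop
        (nhds (R2 0 + γ2/μ2 * N2 0)) := by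
      apply Tendsto.congr' _ tendsto_const_nhds
      filter_upwards [eventually_ge_atTop (0:ℝ)] with t ht
      exact (hRN2 t ht).symm
    exact tendsto_nhds_unique h1 h2
  -- identify the limit of N with ε S∞ + Z
  have hcl1 : μ1 * r1 + γ1 * (S1inf + r1) = μ1 * R1 0 + γ1 * N1 0 := by
    have hne : μ1 ≠ 0 := hμ1.ne'
    field_simp at hRN1lim
    linarith [hRN1lim]
  have hcl2 : μ2 * r2 + γ2 * (S2inf + r2) = μ2 * R2 0 + γ2 * N2 0 := by
    have hne : μ2 ≠ 0 := hμ2.ne'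
    field_simp at hRN2lim
    linarith [hRN2lim]
  have hL1eq : S1inf + r1 = ε1 * S1inf + Z1 := by
    rw [hZ1, hε1]
    field_simp
    linear_combination hcl1
  have hL2eq : S2inf + r2 = ε2 * S2inf + Z2 := by
    rw [hZ2, hε2]
    field_simp
    linear_combination hcl2
  have hL1pos : 0 < S1inf + r1 := by
    rw [hL1eq]
    have := mul_nonneg hε1pos.le hS1nn
    linarith
  have hL2pos : 0 < S2inf + r2 := by
    rw [hL2eq]
    have := mul_nonneg hε2pos.le hS2nn
    linarith
  -- fixed point equations
  have hfix1 : S1inf = S1 0 * ((ε1 * S1inf + Z1) / N1 0) ^ (β11/μ1)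
      * ((ε2 * S2inf + Z2) / N2 0) ^ (β12/μ2) := by
    have c1 : Tendsto (fun t => (N1 t / N1 0) ^ (β11/μ1)) atTop
        (nhds (((S1inf + r1) / N1 0) ^ (β11/μ1))) :=
      (Real.continuousAt_rpow_const _ _ (Or.inr (div_pos hβ11 hμ1).le)).tendsto.comp
        (hN1tend.div_const _)
    have c2 : Tendsto (fun t => (N2 t / N2 0) ^ (β12/μ2)) atTop
        (nhds (((S2inf + r2) / N2 0) ^ (β12/μ2))) :=
      (Real.continuousAt_rpow_const _ _ (Or.inr (div_pos hβ12 hμ2).le)).tendsto.comp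
        (hN2tend.div_const _)
    have htend : Tendsto S1 atTop (nhds (S1 0 * ((S1inf + r1) / N1 0) ^ (β11/μ1)
        * ((S2inf + r2) / N2 0) ^ (β12/μ2))) := by
      apply Tendsto.congr' _ ((tendsto_const_nhds.mul c1).mul c2)
      filter_upwards [eventually_ge_atTop (0:ℝ)] with t ht
      exact (hform1 t ht).symm
    have h := tendsto_nhds_unique hS1inf htend
    rw [hL1eq, hL2eq] at h
    exact h
  have hfix2 : S2inf = S2 0 * ((ε1 * S1inf + Z1) / N1 0) ^ (β21/μ1)
      * ((ε2 * S2inf + Z2) / N2 0) ^ (β22/μ2) := by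
    have c1 : Tendsto (fun t => (N1 t / N1 0) ^ (β21/μ1)) atTop
        (nhds (((S1inf + r1) / N1 0) ^ (β21/μ1))) :=
      (Real.continuousAt_rpow_const _ _ (Or.inr (div_pos hβ21 hμ1).le)).tendsto.comp
        (hN1tend.div_const _)
    have c2 : Tendsto (fun t => (N2 t / N2 0) ^ (β22/μ2)) atTop
        (nhds (((S2inf + r2) / N2 0) ^ (β22/μ2))) :=
      (Real.continuousAt_rpow_const _ _ (Or.inr (div_pos hβ22 hμ2).le)).tendsto.comp
        (hN2tend.div_const _)
    have htend : Tendsto S2 atTop (nhds (S2 0 * ((S1inf + r1) / N1 0) ^ (β21/μ1)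
        * ((S2inf + r2) / N2 0) ^ (β22/μ2))) := by
      apply Tendsto.congr' _ ((tendsto_const_nhds.mul c1).mul c2)
      filter_upwards [eventually_ge_atTop (0:ℝ)] with t ht
      exact (hform2 t ht).symm
    have h := tendsto_nhds_unique hS2inf htend
    rw [hL1eq, hL2eq] at h
    exact h
  have hfixT : T (S1inf, S2inf) = (S1inf, S2inf) := by
    rw [hT]
    simp only [Tmap]
    rw [Prod.mk.injEq]
    exact ⟨hfix1.symm, hfix2.symm⟩
  -- positivity and monotonicity of T
  have hTpos : ∀ x : ℝ × ℝ, 0 ≤ x.1 → 0 ≤ x.2 → 0 < (T x).1 ∧ 0 < (T x).2 := by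
    intro x h1 h2
    have hb1 : 0 < (ε1 * x.1 + Z1) / N1 0 :=
      div_pos (by linarith [mul_nonneg hε1pos.le h1]) hN10
    have hb2 : 0 < (ε2 * x.2 + Z2) / N2 0 :=
      div_pos (by linarith [mul_nonneg hε2pos.le h2]) hN20
    rw [hT]
    simp only [Tmap]
    exact ⟨mul_pos (mul_pos hS10 (Real.rpow_pos_of_pos hb1 _)) (Real.rpow_pos_of_pos hb2 _),
      mul_pos (mul_pos hS20 (Real.rpow_pos_of_pos hb1 _)) (Real.rpow_pos_of_pos hb2 _)⟩
  have hTmono : ∀ x y : ℝ × ℝ, 0 ≤ x.1 → 0 ≤ x.2 → x.1 ≤ y.1 → x.2 ≤ y.2 →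
      (T x).1 ≤ (T y).1 ∧ (T x).2 ≤ (T y).2 := by
    intro x y hx1 hx2 h1 h2
    have hb1x : 0 ≤ (ε1 * x.1 + Z1) / N1 0 :=
      (div_pos (by linarith [mul_nonneg hε1pos.le hx1]) hN10).le
    have hb2x : 0 ≤ (ε2 * x.2 + Z2) / N2 0 :=
      (div_pos (by linarith [mul_nonneg hε2pos.le hx2]) hN20).le
    have hb1 : (ε1 * x.1 + Z1) / N1 0 ≤ (ε1 * y.1 + Z1) / N1 0 := by
      exact (div_le_div_iff_of_pos_right hN10).2 (by linarith [mul_le_mul_of_nonneg_left h1 hε1pos.le])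
    have hb2 : (ε2 * x.2 + Z2) / N2 0 ≤ (ε2 * y.2 + Z2) / N2 0 :=
      (div_le_div_iff_of_pos_right hN20).2 (by linarith [mul_le_mul_of_nonneg_left h2 hε2pos.le])
    have hb1y : 0 ≤ (ε1 * y.1 + Z1) / N1 0 := le_trans hb1x hb1
    have r11 := Real.rpow_le_rpow hb1x hb1 (div_pos hβ11 hμ1).le
    have r12 := Real.rpow_le_rpow hb2x hb2 (div_pos hβ12 hμ2).le
    have r21 := Real.rpow_le_rpow hb1x hb1 (div_pos hβ21 hμ1).le
    have r22 := Real.rpow_le_rpow hb2x hb2 (div_pos hβ22 hμ2).le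
    rw [hT]
    simp only [Tmap]
    constructor
    · exact mul_le_mul (mul_le_mul_of_nonneg_left r11 hS10.le) r12
        (Real.rpow_nonneg hb2x _) (mul_nonneg hS10.le (Real.rpow_nonneg hb1y _))
    · exact mul_le_mul (mul_le_mul_of_nonneg_left r21 hS20.le) r22
        (Real.rpow_nonneg hb2x _) (mul_nonneg hS20.le (Real.rpow_nonneg hb1y _))
  -- S is antitone, so S∞ ≤ S 0
  have hanti1 : AntitoneOn S1 (Set.Ici (0:ℝ)) := by
    apply antitoneOn_of_deriv_nonpos (convex_Ici 0)
    · exact fun t ht => (hS1' t ht).continuousAt.continuousWithinAt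
    · intro t ht
      rw [interior_Ici] at ht
      exact (hS1' t ht.le).differentiableAt.differentiableWithinAt
    · intro t ht
      rw [interior_Ici] at ht
      rw [(hS1' t ht.le).deriv]
      have hF : 0 ≤ β11 * I1 t / N1 t + β12 * I2 t / N2 t := by
        have := (hnn1 t ht.le).2.1
        have := (hnn2 t ht.le).2.1
        have := (hN1pos t ht.le)
        have := (hN2pos t ht.le)
        positivity
      have hmm := mul_nonneg hF (hnn1 t ht.le).1
      have h0 : -(β11 * I1 t / N1 t + β12 * I2 t / N2 t) * S1 t
          = -((β11 * I1 t / N1 t + β12 * I2 t / N2 t) * S1 t) := by ring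
      rw [h0]
      exact neg_nonpos.mpr hmm
  have hanti2 : AntitoneOn S2 (Set.Ici (0:ℝ)) := by
    apply antitoneOn_of_deriv_nonpos (convex_Ici 0)
    · exact fun t ht => (hS2' t ht).continuousAt.continuousWithinAt
    · intro t ht
      rw [interior_Ici] at ht
      exact (hS2' t ht.le).differentiableAt.differentiableWithinAt
    · intro t ht
      rw [interior_Ici] at ht
      rw [(hS2' t ht.le).deriv]
      have hF : 0 ≤ β21 * I1 t / N1 t + β22 * I2 t / N2 t := by
        have := (hnn1 t ht.le).2.1
        have := (hnn2 t ht.le).2.1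
        have := (hN1pos t ht.le)
        have := (hN2pos t ht.le)
        positivity
      have hmm := mul_nonneg hF (hnn2 t ht.le).1
      have h0 : -(β21 * I1 t / N1 t + β22 * I2 t / N2 t) * S2 t
          = -((β21 * I1 t / N1 t + β22 * I2 t / N2 t) * S2 t) := by ring
      rw [h0]
      exact neg_nonpos.mpr hmm
  have hS1le : S1inf ≤ S1 0 :=
    le_of_tendsto hS1inf (by
      filter_upwards [eventually_ge_atTop (0:ℝ)] with t ht
      exact hanti1 (Set.mem_Ici.2 le_rfl) (Set.mem_Ici.2 ht) ht)
  have hS2le : S2inf ≤ S2 0 :=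
    le_of_tendsto hS2inf (by
      filter_upwards [eventually_ge_atTop (0:ℝ)] with t ht
      exact hanti2 (Set.mem_Ici.2 le_rfl) (Set.mem_Ici.2 ht) ht)
  -- iteration bounds
  have hlow : ∀ n, 0 ≤ (T^[n] (0, 0)).1 ∧ 0 ≤ (T^[n] (0, 0)).2 ∧
      (T^[n] (0, 0)).1 ≤ S1inf ∧ (T^[n] (0, 0)).2 ≤ S2inf := by
    intro n
    induction n with
    | zero => simpa using ⟨hS1nn, hS2nn⟩
    | succ n ih =>
      rw [Function.iterate_succ_apply']
      obtain ⟨h1, h2, h3, h4⟩ := ih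
      have hm := hTmono _ (S1inf, S2inf) h1 h2 h3 h4
      have hp := hTpos _ h1 h2
      rw [hfixT] at hm
      exact ⟨hp.1.le, hp.2.le, hm.1, hm.2⟩
  have hup : ∀ n, S1inf ≤ (T^[n] (S1 0, S2 0)).1 ∧ S2inf ≤ (T^[n] (S1 0, S2 0)).2 := by
    intro n
    induction n with
    | zero => simpa using ⟨hS1le, hS2le⟩
    | succ n ih =>
      rw [Function.iterate_succ_apply']
      have hm := hTmono (S1inf, S2inf) _ hS1nn hS2nn ih.1 ih.2
      rw [hfixT] at hm
      exact hm
  -- conclude by passing to the limit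
  have hSm1 : Tendsto (fun n => (T^[n] ((0:ℝ), (0:ℝ))).1) atTop (nhds Sm.1) :=
    (continuous_fst.tendsto Sm).comp hSm
  have hSm2 : Tendsto (fun n => (T^[n] ((0:ℝ), (0:ℝ))).2) atTop (nhds Sm.2) :=
    (continuous_snd.tendsto Sm).comp hSm
  have hSp1 : Tendsto (fun n => (T^[n] (S1 0, S2 0)).1) atTop (nhds Sp.1) :=
    (continuous_fst.tendsto Sp).comp hSp
  have hSp2 : Tendsto (fun n => (T^[n] (S1 0, S2 0)).2) atTop (nhds Sp.2) :=
    (continuous_snd.tendsto Sp).comp hSp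
  refine ⟨⟨?_, ?_⟩, ⟨?_, ?_⟩⟩
  · exact le_of_tendsto hSm1 (Eventually.of_forall fun n => (hlow n).2.2.1)
  · exact ge_of_tendsto hSp1 (Eventually.of_forall fun n => (hup n).1)
  · exact le_of_tendsto hSm2 (Eventually.of_forall fun n => (hlow n).2.2.2)
  · exact ge_of_tendsto hSp2 (Eventually.of_forall fun n => (hup n).2)
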